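/- For all n ∈ ℕ and every set S of positive integers, (A_{n,S} : ℚ)/n! = ∑_{π} 1/(|π|! · ∏_i π_i), where the sum ranges over all compositions π of n all of whose parts lie in S. -/

import Mathlib

open Function Equiv

theorem minPeriod_comap {α β : Type*} {f : α → α} {g : β → β} {e : α → β}
    (he : Function.Injective e) (hc : ∀ a, g (e a) = e (f a)) (a : α) :
    Function.minimalPeriod g (e a) = Function.minimalPeriod f a := by
  have hiter : ∀ (k : ℕ) (a : α), g^[k] (e a) = e (f^[k] a) := by
    intro k
    induction k with
    | zero => simp
    | succ k ih => intro a; rw [Function.iterate_succ_apply, Function.iterate_succ_apply, hc, ih]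
  have hper : ∀ k, IsPeriodicPt g k (e a) ↔ IsPeriodicPt f k a := by
    intro k
    simp only [IsPeriodicPt, IsFixedPt, hiter, he.eq_iff]
  by_cases h : a ∈ periodicPts f
  · have h1 : 0 < minimalPeriod f a := minimalPeriod_pos_of_mem_periodicPts h
    have h2 : e a ∈ periodicPts g := by
      obtain ⟨k, hk, hk'⟩ := h
      exact ⟨k, hk, (hper k).mpr hk'⟩
    have h3 : 0 < minimalPeriod g (e a) := minimalPeriod_pos_of_mem_periodicPts h2
    exact le_antisymm
      (((hper _).mpr (isPeriodicPt_minimalPeriod f a)).minimalPeriod_le h1)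
      (((hper _).mp (isPeriodicPt_minimalPeriod g (e a))).minimalPeriod_le h3)
  · have h2 : e a ∉ periodicPts g := by
      rintro ⟨k, hk, hk'⟩
      exact h ⟨k, hk, (hper k).mp hk'⟩
    rw [minimalPeriod_eq_zero_of_notMem_periodicPts h,
      minimalPeriod_eq_zero_of_notMem_periodicPts h2]

theorem rot_pow_apply {s : ℕ} (k : ℕ) (i : ZMod s) :
    ((Equiv.addRight (1 : ZMod s)) ^ k) i = i + k := by
  induction k with
  | zero => simp
  | succ k ih =>
    rw [pow_succ', Equiv.Perm.mul_apply, ih, Equiv.coe_addRight]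
    push_cast
    ring

theorem rot_minimalPeriod {s : ℕ} [NeZero s] (i : ZMod s) :
    Function.minimalPeriod (⇑(Equiv.addRight (1 : ZMod s))) i = s := by
  have hs : 0 < s := Nat.pos_of_ne_zero (NeZero.ne s)
  have hper : ∀ k : ℕ, IsPeriodicPt (⇑(Equiv.addRight (1 : ZMod s))) k i ↔ (s : ℕ) ∣ k := by
    intro k
    rw [IsPeriodicPt, IsFixedPt, Equiv.Perm.iterate_eq_pow, rot_pow_apply]
    rw [← ZMod.natCast_eq_zero_iff k s]
    constructor
    · intro h
      simpa using h
    · intro h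
      simp [h]
  have h1 : IsPeriodicPt (⇑(Equiv.addRight (1 : ZMod s))) s i := (hper s).mpr dvd_rfl
  have h2 := h1.minimalPeriod_le hs
  have h3 : (s:ℕ) ∣ Function.minimalPeriod (⇑(Equiv.addRight (1 : ZMod s))) i :=
    (hper _).mp (isPeriodicPt_minimalPeriod _ _)
  have h4 : 0 < Function.minimalPeriod (⇑(Equiv.addRight (1 : ZMod s))) i :=
    h1.minimalPeriod_pos hs
  exact le_antisymm h2 (Nat.le_of_dvd h4 h3)

instance rangeDec {α β : Type*} [Fintype α] [DecidableEq β] (w : α ↪ β) :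
    DecidablePred (· ∈ Set.range w) := fun y => decidable_of_iff (∃ i, w i = y) Set.mem_range.symm

section build
variable {n s : ℕ} [NeZero s]

noncomputable def bigE (w : ZMod s ↪ Fin n) : (ZMod s ⊕ {y : Fin n // y ∉ Set.range w}) ≃ Fin n :=
  (Equiv.sumCongr (Equiv.ofInjective w w.injective) (Equiv.refl _)).trans
    (Equiv.sumCompl (· ∈ Set.range w))

lemma bigE_inl (w : ZMod s ↪ Fin n) (i : ZMod s) : bigE w (Sum.inl i) = w i := by
  simp [bigE]

lemma bigE_inr (w : ZMod s ↪ Fin n) (y : {y : Fin n // y ∉ Set.range w}) :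
    bigE w (Sum.inr y) = ↑y := by
  simp [bigE]

noncomputable def buildPerm (w : ZMod s ↪ Fin n) (τ : Equiv.Perm {y : Fin n // y ∉ Set.range w}) :
    Equiv.Perm (Fin n) :=
  Equiv.permCongr (bigE w) (Equiv.sumCongr (Equiv.addRight 1) τ)

lemma buildPerm_apply_w (w : ZMod s ↪ Fin n) (τ : Equiv.Perm {y : Fin n // y ∉ Set.range w})
    (i : ZMod s) : buildPerm w τ (w i) = w (i + 1) := by
  rw [← bigE_inl w i, buildPerm, Equiv.permCongr_apply, Equiv.symm_apply_apply]
  simp [bigE_inl]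

lemma buildPerm_apply_c (w : ZMod s ↪ Fin n) (τ : Equiv.Perm {y : Fin n // y ∉ Set.range w})
    (y : {y : Fin n // y ∉ Set.range w}) : buildPerm w τ ↑y = ↑(τ y) := by
  rw [← bigE_inr w y, buildPerm, Equiv.permCongr_apply, Equiv.symm_apply_apply]
  simp [bigE_inr]

lemma buildPerm_minPeriod_w (w : ZMod s ↪ Fin n) (τ : Equiv.Perm {y : Fin n // y ∉ Set.range w})
    (i : ZMod s) : Function.minimalPeriod (⇑(buildPerm w τ)) (w i) = s := by
  have := minPeriod_comap (f := ⇑(Equiv.addRight (1 : ZMod s))) (g := ⇑(buildPerm w τ))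
    (e := ⇑w) w.injective (fun a => by rw [Equiv.coe_addRight, buildPerm_apply_w]) i
  rw [this, rot_minimalPeriod]

lemma buildPerm_minPeriod_c (w : ZMod s ↪ Fin n) (τ : Equiv.Perm {y : Fin n // y ∉ Set.range w})
    (y : {y : Fin n // y ∉ Set.range w}) :
    Function.minimalPeriod (⇑(buildPerm w τ)) ↑y = Function.minimalPeriod (⇑τ) y := by
  exact minPeriod_comap (f := ⇑τ) (g := ⇑(buildPerm w τ)) (e := Subtype.val)
    Subtype.val_injective (fun a => buildPerm_apply_c w τ a) y

end build

/-- Generalized factorial number `A_{n,S}`: the number of permutations of `{1,…,n}`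
all of whose cycle lengths lie in `S` (fixed points counting as cycles of length 1). -/
noncomputable def genA (S : Set ℕ) (n : ℕ) : ℕ :=
  Nat.card {σ : Equiv.Perm (Fin n) // ∀ x, Function.minimalPeriod σ x ∈ S}

theorem genA_card (S : Set ℕ) {β : Type*} [Fintype β] [DecidableEq β] {m : ℕ}
    (h : Fintype.card β = m) :
    Nat.card {σ : Equiv.Perm β // ∀ x, Function.minimalPeriod σ x ∈ S} = genA S m := by
  have e : β ≃ Fin m := Fintype.equivFinOfCardEq h
  refine Nat.card_congr (Equiv.subtypeEquiv (Equiv.permCongr e) ?_)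
  intro σ
  constructor
  · intro hσ x
    have : (Equiv.permCongr e σ) x = (Equiv.permCongr e σ) (e (e.symm x)) := by simp
    have h2 := minPeriod_comap (f := ⇑σ) (g := ⇑(Equiv.permCongr e σ)) (e := ⇑e)
      e.injective (by intro a; simp [Equiv.permCongr_apply]) (e.symm x)
    simp only [Equiv.apply_symm_apply] at h2
    rw [h2]; exact hσ _
  · intro hσ x
    have h2 := minPeriod_comap (f := ⇑σ) (g := ⇑(Equiv.permCongr e σ)) (e := ⇑e)
      e.injective (by intro a; simp [Equiv.permCongr_apply]) x
    have := hσ (e x)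
    rwa [h2] at this

theorem genA_zero (S : Set ℕ) : genA S 0 = 1 := by
  rw [genA]
  have : Unique {σ : Equiv.Perm (Fin 0) // ∀ x, Function.minimalPeriod σ x ∈ S} := by
    refine ⟨⟨⟨1, fun x => x.elim0⟩⟩, ?_⟩
    rintro ⟨σ, hσ⟩
    ext x
    exact x.elim0
  exact Nat.card_unique

section fiber
variable {n s : ℕ} (S : Set ℕ) [DecidablePred (· ∈ S)]

theorem fiber_card [NeZero s] (hsS : s ∈ S) :
    Nat.card {p : {σ : Equiv.Perm (Fin n) // ∀ x, Function.minimalPeriod σ x ∈ S} × Fin n //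
        Function.minimalPeriod (⇑p.1.1) p.2 = s}
      = n.descFactorial s * genA S (n - s) := by
  have hs : 0 < s := Nat.pos_of_ne_zero (NeZero.ne s)
  -- the sigma type
  set T := Σ w : ZMod s ↪ Fin n,
    {τ : Equiv.Perm {y : Fin n // y ∉ Set.range w} // ∀ x, Function.minimalPeriod (⇑τ) x ∈ S}
    with hT
  have key : Nat.card T = Nat.card {p : {σ : Equiv.Perm (Fin n) //
      ∀ x, Function.minimalPeriod (⇑σ) x ∈ S} × Fin n //
        Function.minimalPeriod (⇑p.1.1) p.2 = s} := by
    refine Nat.card_congr (Equiv.ofBijective (fun t => ?_) ⟨?_, ?_⟩)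
    · refine ⟨⟨⟨buildPerm t.1 t.2.1, ?_⟩, t.1 0⟩, buildPerm_minPeriod_w t.1 t.2.1 0⟩
      intro x
      by_cases hx : x ∈ Set.range t.1
      · obtain ⟨i, rfl⟩ := hx
        rw [buildPerm_minPeriod_w]
        exact hsS
      · have := buildPerm_minPeriod_c t.1 t.2.1 ⟨x, hx⟩
        rw [this]
        exact t.2.2 _
    · -- injective
      rintro ⟨w, τ, hτ⟩ ⟨w', τ', hτ'⟩ h
      simp only [Subtype.mk.injEq, Prod.mk.injEq] at h
      obtain ⟨hσ, hx⟩ := h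
      have hσ' : buildPerm w τ = buildPerm w' τ' := hσ
      have hww : ∀ k : ℕ, w (k : ZMod s) = w' (k : ZMod s) := by
        intro k
        induction k with
        | zero => simpa using hx
        | succ k ih =>
          have h1 : buildPerm w τ (w (k : ZMod s)) = w ((k : ZMod s) + 1) :=
            buildPerm_apply_w w τ _
          have h2 : buildPerm w' τ' (w' (k : ZMod s)) = w' ((k : ZMod s) + 1) :=
            buildPerm_apply_w w' τ' _
          rw [ih, hσ'] at h1
          rw [h1] at h2
          push_cast
          exact h2
      have hww' : w = w' := by
        ext i
        have := hww i.val
        rw [ZMod.natCast_rightInverse i] at this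
        exact congrArg Fin.val this
      subst hww'
      have hττ : τ = τ' := by
        ext y
        have h1 := buildPerm_apply_c w τ y
        have h2 := buildPerm_apply_c w τ' y
        rw [hσ'] at h1
        rw [h1] at h2
        exact congrArg Fin.val h2
      exact congrArg (Sigma.mk w) (Subtype.ext hττ)
    · -- surjective
      rintro ⟨⟨⟨σ, hσ⟩, x⟩, hfib⟩
      simp only at hfib
      -- build w
      have hinj : Function.Injective (fun i : ZMod s => (σ ^ i.val) x) := by
        intro i j hij
        apply ZMod.val_injective
        have hi : i.val ∈ Set.Iio (Function.minimalPeriod (⇑σ) x) := by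
          rw [hfib]; exact ZMod.val_lt i
        have hj : j.val ∈ Set.Iio (Function.minimalPeriod (⇑σ) x) := by
          rw [hfib]; exact ZMod.val_lt j
        apply Function.iterate_injOn_Iio_minimalPeriod hi hj
        simpa [Equiv.Perm.iterate_eq_pow] using hij
      set w : ZMod s ↪ Fin n := ⟨fun i => (σ ^ i.val) x, hinj⟩ with hw
      have hcast : ∀ k : ℕ, w (k : ZMod s) = (σ ^ k) x := by
        intro k
        show (σ ^ ((k : ZMod s)).val) x = (σ ^ k) x
        rw [ZMod.val_natCast, ← hfib]
        rw [← Equiv.Perm.iterate_eq_pow, ← Equiv.Perm.iterate_eq_pow]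
        exact Function.iterate_mod_minimalPeriod_eq
      have hstep : ∀ i : ZMod s, σ (w i) = w (i + 1) := by
        intro i
        conv_lhs => rw [← ZMod.natCast_rightInverse i]
        rw [hcast i.val]
        have : σ ((σ ^ i.val) x) = (σ ^ (i.val + 1)) x := by
          rw [pow_succ', Equiv.Perm.mul_apply]
        rw [this, ← hcast (i.val + 1)]
        push_cast
        rw [ZMod.natCast_rightInverse i]
      have hrange : ∀ y, σ y ∈ Set.range w ↔ y ∈ Set.range w := by
        intro y
        constructor
        · rintro ⟨i, hi⟩
          refine ⟨i - 1, ?_⟩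
          have := hstep (i - 1)
          rw [sub_add_cancel, hi] at this
          exact σ.injective this
        · rintro ⟨i, rfl⟩
          exact ⟨i + 1, (hstep i).symm⟩
      set τ : Equiv.Perm {y : Fin n // y ∉ Set.range w} :=
        σ.subtypePerm (fun y => not_congr (hrange y)) with hτdef
      have hτc : ∀ a : {y : Fin n // y ∉ Set.range w}, σ ↑a = ↑(τ a) := fun a => rfl
      have hτS : ∀ y, Function.minimalPeriod (⇑τ) y ∈ S := by
        intro y
        have := minPeriod_comap (f := ⇑τ) (g := ⇑σ) (e := Subtype.val)
          Subtype.val_injective (fun a => (hτc a)) y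
        rw [← this]
        exact hσ _
      refine ⟨⟨w, τ, hτS⟩, ?_⟩
      have hbp : buildPerm w τ = σ := by
        apply Equiv.ext
        intro y
        by_cases hy : y ∈ Set.range w
        · obtain ⟨i, rfl⟩ := hy
          rw [buildPerm_apply_w, ← hstep]
        · have := buildPerm_apply_c w τ ⟨y, hy⟩
          rw [this, ← hτc]
      have hw0 : w (0 : ZMod s) = x := by
        have := hcast 0
        simpa using this
      apply Subtype.ext
      apply Prod.ext
      · exact Subtype.ext hbp
      · exact hw0
  rw [← key]
  -- compute card T
  rw [hT, Nat.card_eq_fintype_card, Fintype.card_sigma]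
  have hcardfib : ∀ w : ZMod s ↪ Fin n,
      Fintype.card {τ : Equiv.Perm {y : Fin n // y ∉ Set.range w} //
        ∀ x, Function.minimalPeriod (⇑τ) x ∈ S} = genA S (n - s) := by
    intro w
    rw [← Nat.card_eq_fintype_card]
    apply genA_card
    rw [Fintype.card_subtype_compl]
    have h1 := Fintype.card_congr (Equiv.ofInjective ⇑w w.injective).symm
    rw [ZMod.card] at h1
    rw [Fintype.card_fin]
    congr 1
  rw [Finset.sum_congr rfl (fun w _ => hcardfib w), Finset.sum_const, Finset.card_univ,
    smul_eq_mul, Fintype.card_embedding_eq, ZMod.card, Fintype.card_fin]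

end fiber

theorem minPeriod_le_card {n : ℕ} (σ : Equiv.Perm (Fin n)) (x : Fin n) :
    Function.minimalPeriod (⇑σ) x ≤ n := by
  set m := Function.minimalPeriod (⇑σ) x with hm
  have hinj : Function.Injective (fun k : Fin m => (⇑σ)^[k.val] x) := by
    intro i j hij
    exact Fin.ext (Function.iterate_injOn_Iio_minimalPeriod (by exact i.isLt) (by exact j.isLt) hij)
  simpa using Fintype.card_le_of_injective _ hinj

theorem genA_rec (S : Set ℕ) [DecidablePred (· ∈ S)] (hS : 0 ∉ S) (n : ℕ) :
    genA S n * n = ∑ s ∈ Finset.Icc 1 n,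
      if s ∈ S then n.descFactorial s * genA S (n - s) else 0 := by
  classical
  set A := {σ : Equiv.Perm (Fin n) // ∀ x, Function.minimalPeriod (⇑σ) x ∈ S} with hA
  have hmem : ∀ p : A × Fin n, Function.minimalPeriod (⇑p.1.1) p.2 ∈ Finset.Icc 1 n := by
    rintro ⟨⟨σ, hσ⟩, x⟩
    simp only [Finset.mem_Icc]
    refine ⟨?_, minPeriod_le_card σ x⟩
    rcases Nat.eq_zero_or_pos (Function.minimalPeriod (⇑σ) x) with h | h
    · exact absurd (h ▸ hσ x) hS
    · exact h
  have hcard : Fintype.card (A × Fin n) = ∑ s ∈ Finset.Icc 1 n,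
      Fintype.card {p : A × Fin n // Function.minimalPeriod (⇑p.1.1) p.2 = s} := by
    rw [← Finset.card_univ,
      Finset.card_eq_sum_card_fiberwise (f := fun p : A × Fin n =>
        Function.minimalPeriod (⇑p.1.1) p.2) (t := Finset.Icc 1 n) (fun p _ => hmem p)]
    refine Finset.sum_congr rfl fun s _ => ?_
    rw [Fintype.card_subtype]
  have hfib : ∀ s ∈ Finset.Icc 1 n,
      Fintype.card {p : A × Fin n // Function.minimalPeriod (⇑p.1.1) p.2 = s}
        = if s ∈ S then n.descFactorial s * genA S (n - s) else 0 := by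
    intro s hsIcc
    simp only [Finset.mem_Icc] at hsIcc
    by_cases hsS : s ∈ S
    · haveI : NeZero s := ⟨Nat.one_le_iff_ne_zero.mp hsIcc.1⟩
      rw [if_pos hsS, ← fiber_card S hsS, Nat.card_eq_fintype_card]
    · rw [if_neg hsS]
      rw [Fintype.card_eq_zero_iff]
      refine ⟨fun p => ?_⟩
      exact hsS (p.2 ▸ p.1.1.2 p.1.2)
  have hprod : Fintype.card (A × Fin n) = genA S n * n := by
    rw [Fintype.card_prod, Fintype.card_fin, genA, Nat.card_eq_fintype_card]
  rw [← hprod, hcard]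
  exact Finset.sum_congr rfl hfib

namespace CompHelp

def insL (l : List ℕ) (j s : ℕ) : List ℕ := l.take j ++ s :: l.drop j
def ersL (l : List ℕ) (j : ℕ) : List ℕ := l.take j ++ l.drop (j + 1)

lemma insL_perm (l : List ℕ) (j s : ℕ) : (insL l j s).Perm (s :: l) := by
  have := List.perm_middle (a := s) (l₁ := l.take j) (l₂ := l.drop j)
  rw [insL]
  simpa [List.take_append_drop] using this

lemma insL_sum (l : List ℕ) (j s : ℕ) : (insL l j s).sum = s + l.sum := by
  rw [(insL_perm l j s).sum_eq, List.sum_cons]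

lemma insL_prod (l : List ℕ) (j s : ℕ) : (insL l j s).prod = s * l.prod := by
  rw [(insL_perm l j s).prod_eq, List.prod_cons]

lemma insL_length (l : List ℕ) (j s : ℕ) : (insL l j s).length = l.length + 1 := by
  rw [(insL_perm l j s).length_eq, List.length_cons]

lemma insL_mem {l : List ℕ} {j s a : ℕ} (h : a ∈ insL l j s) : a = s ∨ a ∈ l := by
  have := (insL_perm l j s).mem_iff.mp h
  simpa using this

lemma take_ersL (l : List ℕ) {j : ℕ} (hj : j ≤ l.length) : (ersL l j).take j = l.take j := by
  rw [ersL, List.take_append_of_le_length]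
  · rw [List.take_take, min_self]
  · simpa using hj

lemma insL_getD {l : List ℕ} {j : ℕ} (s : ℕ) (hj : j ≤ l.length) :
    (insL l j s).getD j 0 = s := by
  have hlen : j < (insL l j s).length := by rw [insL_length]; omega
  rw [List.getD_eq_getElem _ _ hlen]
  have : ∀ (hh : j < (l.take j ++ s :: l.drop j).length),
      (l.take j ++ s :: l.drop j)[j]'hh = s := by
    intro hh
    rw [List.getElem_append_right (by simp [Nat.min_eq_left hj])]
    simp [List.length_take, Nat.min_eq_left hj]
  exact this _

lemma ersL_insL {l : List ℕ} {j : ℕ} (s : ℕ) (hj : j ≤ l.length) :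
    ersL (insL l j s) j = l := by
  rw [ersL, insL]
  have h1 : (l.take j ++ s :: l.drop j).take j = l.take j := by
    rw [List.take_append_of_le_length (by simp [Nat.min_eq_left hj]), List.take_take, min_self]
  have h2 : (l.take j ++ s :: l.drop j).drop (j + 1) = l.drop j := by
    have : l.take j ++ s :: l.drop j = (l.take j ++ [s]) ++ l.drop j := by simp
    rw [this, List.drop_left' (by simp [List.length_take, Nat.min_eq_left hj])]
  rw [h1, h2, List.take_append_drop]

lemma insL_ersL {l : List ℕ} {j : ℕ} (hj : j < l.length) :
    insL (ersL l j) j (l.getD j 0) = l := by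
  rw [insL, take_ersL l hj.le]
  have h2 : (ersL l j).drop j = l.drop (j + 1) := by
    rw [ersL, List.drop_left' (by simp [List.length_take, Nat.min_eq_left hj.le])]
  rw [h2, List.getD_eq_getElem _ _ hj, List.getElem_cons_drop, List.take_append_drop]

lemma ersL_length {l : List ℕ} {j : ℕ} (hj : j < l.length) :
    (ersL l j).length = l.length - 1 := by
  rw [ersL, List.length_append, List.length_take, List.length_drop]
  omega

lemma ersL_sum {l : List ℕ} {j : ℕ} (hj : j < l.length) :
    l.getD j 0 + (ersL l j).sum = l.sum := by
  conv_rhs => rw [← List.take_append_drop j l]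
  rw [← List.getElem_cons_drop (as := l) (i := j) hj, ersL, List.sum_append, List.sum_append, List.sum_cons,
    List.getD_eq_getElem _ _ hj]
  omega

lemma ersL_prod {l : List ℕ} {j : ℕ} (hj : j < l.length) :
    l.getD j 0 * (ersL l j).prod = l.prod := by
  conv_rhs => rw [← List.take_append_drop j l]
  rw [← List.getElem_cons_drop (as := l) (i := j) hj, ersL, List.prod_append, List.prod_append, List.prod_cons,
    List.getD_eq_getElem _ _ hj]
  ring

lemma ersL_mem {l : List ℕ} {j a : ℕ} (h : a ∈ ersL l j) : a ∈ l := by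
  rw [ersL, List.mem_append] at h
  exact h.elim List.mem_of_mem_take List.mem_of_mem_drop

end CompHelp

open CompHelp

/-- erase the `j`-th block of a composition. -/
def eraseComp {n : ℕ} (π : Composition n) (j : ℕ) (hj : j < π.length) :
    Composition (n - π.blocks.getD j 0) where
  blocks := ersL π.blocks j
  blocks_pos := fun h => π.blocks_pos (ersL_mem h)
  blocks_sum := by
    have := ersL_sum (l := π.blocks) (j := j) (by simpa [Composition.length] using hj)
    rw [π.blocks_sum] at this
    omega

/-- insert a block `s` at position `j` in a composition. -/
def insComp {m : ℕ} (π : Composition m) (j s : ℕ) (hs : 0 < s) : Composition (s + m) where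
  blocks := insL π.blocks j s
  blocks_pos := fun h => (insL_mem h).elim (fun h' => h' ▸ hs) π.blocks_pos
  blocks_sum := by rw [insL_sum, π.blocks_sum]

def castComp {m m' : ℕ} (h : m = m') (π : Composition m) : Composition m' :=
  ⟨π.blocks, π.blocks_pos, h ▸ π.blocks_sum⟩

lemma sig_eq₁ {n : ℕ} {π π' : Composition n} (hb : π.blocks = π'.blocks) {j j' : ℕ}
    (hj : j = j') : (⟨π, j⟩ : Σ _ : Composition n, ℕ) = ⟨π', j'⟩ := by
  subst hj
  obtain rfl := Composition.ext hb
  rfl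

lemma sig_eq₂ {n : ℕ} {s s' : ℕ} (h : s = s') {π : Composition (n - s)}
    {π' : Composition (n - s')} (hb : π.blocks = π'.blocks) {j j' : ℕ} (hj : j = j') :
    (⟨s, π, j⟩ : Σ s : ℕ, (Σ _ : Composition (n - s), ℕ)) = ⟨s', π', j'⟩ := by
  subst h hj
  obtain rfl := Composition.ext hb
  rfl

lemma listsum_cast (l : List ℕ) :
    (l.sum : ℚ) = ∑ j ∈ Finset.range l.length, (l.getD j 0 : ℚ) := by
  induction l with
  | nil => simp
  | cons a l ih =>
    rw [List.sum_cons, List.length_cons, Finset.sum_range_succ', Nat.cast_add, ih]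
    simp only [List.getD_cons_succ, List.getD_cons_zero]
    ring

lemma comp_prod_pos {n : ℕ} (π : Composition n) : 0 < π.blocks.prod :=
  List.prod_pos (fun _ h => π.blocks_pos h)

noncomputable def Fq (S : Set ℕ) [DecidablePred (· ∈ S)] (n : ℕ) : ℚ :=
  ∑ π ∈ Finset.univ.filter (fun π : Composition n => ∀ i ∈ π.blocks, i ∈ S),
    1 / ((π.length.factorial : ℚ) * (π.blocks.prod : ℚ))

theorem Fq_rec (S : Set ℕ) [DecidablePred (· ∈ S)] (n : ℕ) :
    (n : ℚ) * Fq S n = ∑ s ∈ Finset.Icc 1 n, if s ∈ S then Fq S (n - s) else 0 := by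
  classical
  rw [← Finset.sum_filter]
  rw [Fq, Finset.mul_sum]
  have hL : ∀ π ∈ Finset.univ.filter (fun π : Composition n => ∀ i ∈ π.blocks, i ∈ S),
      (n : ℚ) * (1 / ((π.length.factorial : ℚ) * (π.blocks.prod : ℚ)))
        = ∑ j ∈ Finset.range π.length,
            (π.blocks.getD j 0 : ℚ) * (1 / ((π.length.factorial : ℚ) * (π.blocks.prod : ℚ))) := by
    intro π _
    rw [← Finset.sum_mul]
    congr 1
    rw [← π.blocks_length, ← listsum_cast, π.blocks_sum]
  rw [Finset.sum_congr rfl hL, Finset.sum_sigma']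
  have hR : ∀ s ∈ (Finset.Icc 1 n).filter (· ∈ S),
      Fq S (n - s) = ∑ p ∈ (Finset.univ.filter
            (fun π : Composition (n - s) => ∀ i ∈ π.blocks, i ∈ S)).sigma
            (fun π => Finset.range (π.length + 1)),
          1 / (((p.1.length + 1).factorial : ℚ) * (p.1.blocks.prod : ℚ)) := by
    intro s _
    rw [Finset.sum_sigma]
    rw [Fq]
    refine Finset.sum_congr rfl fun π' _ => ?_
    dsimp only
    rw [Finset.sum_const, Finset.card_range, nsmul_eq_mul, Nat.factorial_succ, Nat.cast_mul]
    have h1 : (π'.length.factorial : ℚ) ≠ 0 := by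
      exact_mod_cast Nat.factorial_ne_zero _
    have h2 : (π'.blocks.prod : ℚ) ≠ 0 := by
      exact_mod_cast (comp_prod_pos π').ne'
    have h5 : ((π'.length + 1 : ℕ) : ℚ) ≠ 0 := Nat.cast_ne_zero.mpr (Nat.succ_ne_zero _)
    set F := (π'.length.factorial : ℚ) with hF
    set P := (π'.blocks.prod : ℚ) with hP
    set L := ((π'.length + 1 : ℕ) : ℚ) with hL'
    field_simp
  rw [Finset.sum_congr rfl hR, Finset.sum_sigma']
  refine Finset.sum_bij'
    (fun (a : Σ _ : Composition n, ℕ) (ha : a ∈ _) =>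
      (⟨a.1.blocks.getD a.2 0,
        eraseComp a.1 a.2 (Finset.mem_range.mp (Finset.mem_sigma.mp ha).2), a.2⟩ :
        Σ s : ℕ, (Σ _ : Composition (n - s), ℕ)))
    (fun (b : Σ s : ℕ, (Σ _ : Composition (n - s), ℕ)) (hb : b ∈ _) =>
      (⟨castComp (by
          have := Finset.mem_Icc.mp (Finset.mem_filter.mp (Finset.mem_sigma.mp hb).1).1
          omega)
        (insComp b.2.1 b.2.2 b.1 (by
          have := Finset.mem_Icc.mp (Finset.mem_filter.mp (Finset.mem_sigma.mp hb).1).1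
          omega)), b.2.2⟩ : Σ _ : Composition n, ℕ))
    ?_ ?_ ?_ ?_ ?_
  · -- hi : image in s₂
    rintro ⟨π, j⟩ ha
    obtain ⟨haπ, haj⟩ := Finset.mem_sigma.mp ha
    have hj : j < π.length := Finset.mem_range.mp haj
    have hP : ∀ i ∈ π.blocks, i ∈ S := (Finset.mem_filter.mp haπ).2
    have hmem : π.blocks.getD j 0 ∈ π.blocks := by
      rw [List.getD_eq_getElem _ _ (by simpa [Composition.blocks_length] using hj)]
      exact List.getElem_mem _
    rw [Finset.mem_sigma]
    constructor
    · rw [Finset.mem_filter, Finset.mem_Icc]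
      have hle : π.blocks.getD j 0 ≤ π.blocks.sum :=
        List.single_le_sum (fun _ _ => Nat.zero_le _) _ hmem
      rw [π.blocks_sum] at hle
      exact ⟨⟨π.blocks_pos hmem, hle⟩, hP _ hmem⟩
    · rw [Finset.mem_sigma]
      constructor
      · rw [Finset.mem_filter]
        exact ⟨Finset.mem_univ _, fun i hi => hP i (ersL_mem hi)⟩
      · rw [Finset.mem_range]
        show j < (ersL π.blocks j).length + 1
        have hj' : j < π.blocks.length := by rw [π.blocks_length]; exact hj
        rw [ersL_length hj']
        omega
  · -- hj : image in s₁
    rintro ⟨s, π', j⟩ hb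
    obtain ⟨hbs, hb2⟩ := Finset.mem_sigma.mp hb
    obtain ⟨hbπ, hbj⟩ := Finset.mem_sigma.mp hb2
    obtain ⟨hsIcc, hsS⟩ := Finset.mem_filter.mp hbs
    have hP' : ∀ i ∈ π'.blocks, i ∈ S := (Finset.mem_filter.mp hbπ).2
    rw [Finset.mem_sigma]
    constructor
    · rw [Finset.mem_filter]
      refine ⟨Finset.mem_univ _, fun i hi => ?_⟩
      rcases insL_mem hi with h | h
      · exact h ▸ hsS
      · exact hP' i h
    · rw [Finset.mem_range]
      have h' : j < π'.length + 1 := by simpa using Finset.mem_range.mp hbj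
      show j < (insL π'.blocks j s).length
      rw [insL_length, π'.blocks_length]
      exact h'
  · -- left_inv
    rintro ⟨π, j⟩ ha
    obtain ⟨haπ, haj⟩ := Finset.mem_sigma.mp ha
    have hj : j < π.blocks.length := by
      simpa [Composition.blocks_length] using Finset.mem_range.mp haj
    exact sig_eq₁ (insL_ersL hj) rfl
  · -- right_inv
    rintro ⟨s, π', j⟩ hb
    obtain ⟨hbs, hb2⟩ := Finset.mem_sigma.mp hb
    obtain ⟨hbπ, hbj⟩ := Finset.mem_sigma.mp hb2
    have hj : j ≤ π'.blocks.length := by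
      have h' : j < π'.length + 1 := by simpa using Finset.mem_range.mp hbj
      rw [π'.blocks_length]
      omega
    refine sig_eq₂ (insL_getD s hj) ?_ rfl
    show ersL (insL π'.blocks j s) j = π'.blocks
    rw [ersL_insL s hj]
  · -- summand equality
    rintro ⟨π, j⟩ ha
    obtain ⟨haπ, haj⟩ := Finset.mem_sigma.mp ha
    have hj : j < π.blocks.length := by
      simpa [Composition.blocks_length] using Finset.mem_range.mp haj
    have hlenpos : 0 < π.length := by rw [← π.blocks_length]; omega
    have hlen : (eraseComp π j (Finset.mem_range.mp haj)).length + 1 = π.length := by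
      show (ersL π.blocks j).length + 1 = π.length
      rw [ersL_length hj, π.blocks_length]
      omega
    have hprod : (π.blocks.getD j 0) * (ersL π.blocks j).prod = π.blocks.prod :=
      ersL_prod hj
    have hpos : 0 < π.blocks.getD j 0 := by
      apply π.blocks_pos
      rw [List.getD_eq_getElem _ _ hj]
      exact List.getElem_mem _
    show (π.blocks.getD j 0 : ℚ) * (1 / ((π.length.factorial : ℚ) * (π.blocks.prod : ℚ)))
      = 1 / ((((eraseComp π j (Finset.mem_range.mp haj)).length + 1).factorial : ℚ)
          * ((eraseComp π j (Finset.mem_range.mp haj)).blocks.prod : ℚ))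
    rw [hlen]
    show (π.blocks.getD j 0 : ℚ) * (1 / ((π.length.factorial : ℚ) * (π.blocks.prod : ℚ)))
      = 1 / ((π.length.factorial : ℚ) * ((ersL π.blocks j).prod : ℚ))
    have h1 : (π.length.factorial : ℚ) ≠ 0 := by exact_mod_cast Nat.factorial_ne_zero _
    have h2 : (π.blocks.prod : ℚ) ≠ 0 := by exact_mod_cast (comp_prod_pos π).ne'
    have h3 : ((ersL π.blocks j).prod : ℚ) ≠ 0 := by
      have : 0 < (ersL π.blocks j).prod :=
        List.prod_pos (fun a ha => π.blocks_pos (ersL_mem ha))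
      exact_mod_cast this.ne'
    have h4 : (π.blocks.getD j 0 : ℚ) ≠ 0 := by exact_mod_cast hpos.ne'
    rw [← hprod, Nat.cast_mul]
    set d := ((π.blocks.getD j 0 : ℕ) : ℚ) with hd
    set F := (π.length.factorial : ℚ) with hF
    set p := (((ersL π.blocks j).prod : ℕ) : ℚ) with hp
    field_simp

theorem Fq_zero (S : Set ℕ) [DecidablePred (· ∈ S)] : Fq S 0 = 1 := by
  rw [Fq]
  have hb : ∀ π : Composition 0, π.blocks = [] := by
    intro π
    rcases hlist : π.blocks with _ | ⟨a, l⟩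
    · rfl
    · exfalso
      have hpos : 0 < a := π.blocks_pos (hlist ▸ List.mem_cons_self (a := a) (l := l))
      have hsum := π.blocks_sum
      rw [hlist, List.sum_cons] at hsum
      omega
  rw [Finset.filter_true_of_mem (fun π _ => by rw [hb π]; intro i hi; simp at hi)]
  have hone : ∀ π : Composition 0,
      (1 : ℚ) / ((π.length.factorial : ℚ) * (π.blocks.prod : ℚ)) = 1 := by
    intro π
    have hl : π.length = 0 := by rw [← π.blocks_length, hb π]; rfl
    rw [hl, hb π]
    norm_num
  rw [Finset.sum_congr rfl (fun π _ => hone π), Finset.sum_const, Finset.card_univ,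
    composition_card]
  norm_num

theorem genA_eq (S : Set ℕ) [DecidablePred (· ∈ S)] (hS : 0 ∉ S) (n : ℕ) :
    (genA S n : ℚ) = n.factorial * Fq S n := by
  induction n using Nat.strong_induction_on with
  | _ n ih =>
    rcases Nat.eq_zero_or_pos n with rfl | hn
    · rw [genA_zero, Fq_zero]
      norm_num
    · have hrec := genA_rec S hS n
      have hq := congrArg (fun k : ℕ => (k : ℚ)) hrec
      push_cast at hq
      have hterm : ∀ s ∈ Finset.Icc 1 n,
          (if s ∈ S then (n.descFactorial s : ℚ) * (genA S (n - s) : ℚ) else 0)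
            = (n.factorial : ℚ) * (if s ∈ S then Fq S (n - s) else 0) := by
        intro s hs
        rw [Finset.mem_Icc] at hs
        by_cases hsS : s ∈ S
        · rw [if_pos hsS, if_pos hsS, ih (n - s) (by omega)]
          have hdf := Nat.factorial_mul_descFactorial hs.2
          calc (n.descFactorial s : ℚ) * (((n - s).factorial : ℚ) * Fq S (n - s))
              = (((n - s).factorial * n.descFactorial s : ℕ) : ℚ) * Fq S (n - s) := by
                push_cast; ring
            _ = (n.factorial : ℚ) * Fq S (n - s) := by rw [hdf]
        · simp [hsS]
      rw [Finset.sum_congr rfl hterm, ← Finset.mul_sum, ← Fq_rec] at hq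
      have hn0 : (n : ℚ) ≠ 0 := Nat.cast_ne_zero.mpr hn.ne'
      apply mul_right_cancel₀ hn0
      rw [hq]
      ring

theorem statement6 (S : Set ℕ) [DecidablePred (· ∈ S)] (hS : 0 ∉ S) (n : ℕ) :
    (genA S n : ℚ) / n.factorial =
      ∑ π ∈ Finset.univ.filter
          (fun π : Composition n => ∀ i ∈ π.blocks, i ∈ S),
        1 / ((π.length.factorial : ℚ) * (π.blocks.prod : ℚ)) := by
  rw [genA_eq S hS n,
    mul_div_cancel_left₀ _ (by positivity : ((n.factorial : ℚ)) ≠ 0)]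
  rfl
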